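/- Let Z and Z' be i.i.d. real random variables with E[e^{λZ}] < ∞, and let q(x) = x(eˣ - 1). Then for all λ ∈ ℝ, Ent(e^{λZ}) ≤ E[e^{λZ} q(λ(Z' - Z)₊)], where Ent(X) = E[X log X] - E[X] log E[X] for a nonnegative random variable X, and (·)₊ denotes the positive part. -/

import Mathlib

open MeasureTheory Real

lemma slsi_A_nonneg (l z z' : ℝ) :
    0 ≤ exp (l*z) * (l*z) - exp (l*z) * (l*z') - exp (l*z) + exp (l*z') := by
  have e : exp (l*z) * exp (l*z' - l*z) = exp (l*z') := by
    rw [← Real.exp_add]; ring_nf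
  nlinarith [Real.add_one_le_exp (l*z' - l*z), (Real.exp_pos (l*z)).le]

lemma slsi_G_nonneg (l z z' : ℝ) :
    0 ≤ exp (l*z) * ((l * max (z'-z) 0) * (exp (l * max (z'-z) 0) - 1)) := by
  apply mul_nonneg (Real.exp_pos _).le
  set t := l * max (z'-z) 0 with ht
  rcases le_total 0 t with h|h
  · exact mul_nonneg h (sub_nonneg.2 (Real.one_le_exp h))
  · exact mul_nonneg_of_nonpos_of_nonpos h (sub_nonpos.2 (Real.exp_le_one_iff.2 h))

lemma slsi_identity (l z z' : ℝ) :
    exp (l*z) * ((l * max (z'-z) 0) * (exp (l * max (z'-z) 0) - 1))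
      + exp (l*z') * ((l * max (z-z') 0) * (exp (l * max (z-z') 0) - 1))
    = (exp (l*z) * (l*z) - exp (l*z) * (l*z') - exp (l*z) + exp (l*z'))
      + (exp (l*z') * (l*z') - exp (l*z') * (l*z) - exp (l*z') + exp (l*z)) := by
  rcases le_total z z' with h|h
  · rw [max_eq_left (sub_nonneg.2 h), max_eq_right (sub_nonpos.2 h)]
    have e : exp (l*z) * exp (l*(z'-z)) = exp (l*z') := by rw [← Real.exp_add]; ring_nf
    simp only [mul_zero, zero_mul, Real.exp_zero, sub_self, add_zero]
    linear_combination (l*(z'-z)) * e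
  · rw [max_eq_right (sub_nonpos.2 h), max_eq_left (sub_nonneg.2 h)]
    have e : exp (l*z') * exp (l*(z-z')) = exp (l*z) := by rw [← Real.exp_add]; ring_nf
    simp only [mul_zero, zero_mul, Real.exp_zero, sub_self, add_zero]
    linear_combination (l*(z-z')) * e

/-- Exchangeability of the pair `(Z, Z')` for Lebesgue integrals. -/
lemma slsi_exchange {Ω : Type*} [MeasurableSpace Ω] (μ : Measure Ω) [IsProbabilityMeasure μ]
    (Z Z' : Ω → ℝ) (hZ : Measurable Z) (hZ' : Measurable Z')
    (hindep : ProbabilityTheory.IndepFun Z Z' μ)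
    (hident : ProbabilityTheory.IdentDistrib Z Z' μ μ)
    (F : ℝ × ℝ → ENNReal) (hF : Measurable F) :
    ∫⁻ ω, F (Z ω, Z' ω) ∂μ = ∫⁻ ω, F (Z' ω, Z ω) ∂μ := by
  have h1 : μ.map (fun ω => (Z ω, Z' ω)) = (μ.map Z).prod (μ.map Z') :=
    (ProbabilityTheory.indepFun_iff_map_prod_eq_prod_map_map hZ.aemeasurable
      hZ'.aemeasurable).mp hindep
  have h2 : μ.map (fun ω => (Z' ω, Z ω)) = (μ.map Z').prod (μ.map Z) :=
    (ProbabilityTheory.indepFun_iff_map_prod_eq_prod_map_map hZ'.aemeasurable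
      hZ.aemeasurable).mp hindep.symm
  rw [← lintegral_map hF (hZ.prodMk hZ'), ← lintegral_map hF (hZ'.prodMk hZ), h1, h2,
    hident.map_eq]

/-- Symmetrized logarithmic Sobolev inequality. The right-hand side is stated as a
Lebesgue integral of the nonnegative integrand, so the inequality holds trivially
when that integral is infinite. -/
theorem stmt_16 {Ω : Type*} [MeasurableSpace Ω] (μ : Measure Ω) [IsProbabilityMeasure μ]
    (Z Z' : Ω → ℝ) (hZ : Measurable Z) (hZ' : Measurable Z')
    (hindep : ProbabilityTheory.IndepFun Z Z' μ)
    (hident : ProbabilityTheory.IdentDistrib Z Z' μ μ)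
    (lam : ℝ) (hint : Integrable (fun ω => exp (lam * Z ω)) μ)
    (hint' : Integrable (fun ω => exp (lam * Z ω) * Real.log (exp (lam * Z ω))) μ) :
    ENNReal.ofReal
        ((∫ ω, exp (lam * Z ω) * Real.log (exp (lam * Z ω)) ∂μ) -
          (∫ ω, exp (lam * Z ω) ∂μ) * Real.log (∫ ω, exp (lam * Z ω) ∂μ)) ≤
      ∫⁻ ω, ENNReal.ofReal
        (exp (lam * Z ω) *
          ((lam * max (Z' ω - Z ω) 0) * (exp (lam * max (Z' ω - Z ω) 0) - 1))) ∂μ := by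
  simp only [Real.log_exp] at hint' ⊢
  set G : ℝ × ℝ → ℝ := fun p =>
    exp (lam * p.1) * ((lam * max (p.2 - p.1) 0) * (exp (lam * max (p.2 - p.1) 0) - 1)) with hG
  set A : ℝ × ℝ → ℝ := fun p =>
    exp (lam * p.1) * (lam * p.1) - exp (lam * p.1) * (lam * p.2)
      - exp (lam * p.1) + exp (lam * p.2) with hA
  have hGc : Continuous G := by rw [hG]; fun_prop
  have hAc : Continuous A := by rw [hA]; fun_prop
  have hGm : Measurable (fun p => ENNReal.ofReal (G p)) :=
    ENNReal.measurable_ofReal.comp hGc.measurable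
  have hAm : Measurable (fun p => ENNReal.ofReal (A p)) :=
    ENNReal.measurable_ofReal.comp hAc.measurable
  -- equality of the RHS with ∫⁻ ofReal (A (Z, Z'))
  have hS : (∫⁻ ω, ENNReal.ofReal (G (Z ω, Z' ω)) ∂μ)
      = ∫⁻ ω, ENNReal.ofReal (G (Z' ω, Z ω)) ∂μ :=
    slsi_exchange μ Z Z' hZ hZ' hindep hident _ hGm
  have hT : (∫⁻ ω, ENNReal.ofReal (A (Z ω, Z' ω)) ∂μ)
      = ∫⁻ ω, ENNReal.ofReal (A (Z' ω, Z ω)) ∂μ :=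
    slsi_exchange μ Z Z' hZ hZ' hindep hident _ hAm
  have hGnn : ∀ p : ℝ × ℝ, 0 ≤ G p := fun p => slsi_G_nonneg lam p.1 p.2
  have hAnn : ∀ p : ℝ × ℝ, 0 ≤ A p := fun p => slsi_A_nonneg lam p.1 p.2
  have hsum : ∀ ω, ENNReal.ofReal (G (Z ω, Z' ω)) + ENNReal.ofReal (G (Z' ω, Z ω))
      = ENNReal.ofReal (A (Z ω, Z' ω)) + ENNReal.ofReal (A (Z' ω, Z ω)) := by
    intro ω
    rw [← ENNReal.ofReal_add (hGnn _) (hGnn _), ← ENNReal.ofReal_add (hAnn _) (hAnn _)]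
    exact congrArg ENNReal.ofReal (slsi_identity lam (Z ω) (Z' ω))
  have hGZm : Measurable fun ω => ENNReal.ofReal (G (Z ω, Z' ω)) :=
    hGm.comp (hZ.prodMk hZ')
  have hAZm : Measurable fun ω => ENNReal.ofReal (A (Z ω, Z' ω)) :=
    hAm.comp (hZ.prodMk hZ')
  have h2ST : 2 * (∫⁻ ω, ENNReal.ofReal (G (Z ω, Z' ω)) ∂μ)
      = 2 * ∫⁻ ω, ENNReal.ofReal (A (Z ω, Z' ω)) ∂μ := by
    rw [two_mul, two_mul]
    calc (∫⁻ ω, ENNReal.ofReal (G (Z ω, Z' ω)) ∂μ)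
          + ∫⁻ ω, ENNReal.ofReal (G (Z ω, Z' ω)) ∂μ
        = (∫⁻ ω, ENNReal.ofReal (G (Z ω, Z' ω)) ∂μ)
          + ∫⁻ ω, ENNReal.ofReal (G (Z' ω, Z ω)) ∂μ := by rw [← hS]
      _ = ∫⁻ ω, (ENNReal.ofReal (G (Z ω, Z' ω)) + ENNReal.ofReal (G (Z' ω, Z ω))) ∂μ :=
          (lintegral_add_left hGZm _).symm
      _ = ∫⁻ ω, (ENNReal.ofReal (A (Z ω, Z' ω)) + ENNReal.ofReal (A (Z' ω, Z ω))) ∂μ :=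
          lintegral_congr hsum
      _ = (∫⁻ ω, ENNReal.ofReal (A (Z ω, Z' ω)) ∂μ)
          + ∫⁻ ω, ENNReal.ofReal (A (Z' ω, Z ω)) ∂μ := lintegral_add_left hAZm _
      _ = _ := by rw [← hT]
  have hST : (∫⁻ ω, ENNReal.ofReal (G (Z ω, Z' ω)) ∂μ)
      = ∫⁻ ω, ENNReal.ofReal (A (Z ω, Z' ω)) ∂μ :=
    (ENNReal.mul_right_inj (two_ne_zero) (ENNReal.ofNat_ne_top)).mp h2ST
  have hgoalRHS : (∫⁻ ω, ENNReal.ofReal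
        (exp (lam * Z ω) *
          ((lam * max (Z' ω - Z ω) 0) * (exp (lam * max (Z' ω - Z ω) 0) - 1))) ∂μ)
      = ∫⁻ ω, ENNReal.ofReal (G (Z ω, Z' ω)) ∂μ := rfl
  rw [hgoalRHS, hST]
  -- now reduce to the real inequality when the RHS is finite
  by_cases hfin : (∫⁻ ω, ENNReal.ofReal (A (Z ω, Z' ω)) ∂μ) = ⊤
  · rw [hfin]; exact le_top
  -- integrability of A(Z, Z')
  have hAω : ∀ ω, 0 ≤ A (Z ω, Z' ω) := fun ω => hAnn _
  have hAint : Integrable (fun ω => A (Z ω, Z' ω)) μ := by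
    refine ⟨(hAc.measurable.comp (hZ.prodMk hZ')).aestronglyMeasurable, ?_⟩
    rw [hasFiniteIntegral_iff_ofReal (Filter.Eventually.of_forall hAω)]
    exact lt_top_iff_ne_top.2 hfin
  rw [← ofReal_integral_eq_lintegral_ofReal hAint (Filter.Eventually.of_forall hAω)]
  apply ENNReal.ofReal_le_ofReal
  -- identically distributed auxiliary facts
  have hidXY : ProbabilityTheory.IdentDistrib (fun ω => exp (lam * Z ω))
      (fun ω => exp (lam * Z' ω)) μ μ :=
    hident.comp (Real.measurable_exp.comp (measurable_id.const_mul lam))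
  have hidW : ProbabilityTheory.IdentDistrib (fun ω => lam * Z ω) (fun ω => lam * Z' ω) μ μ :=
    hident.comp (measurable_id.const_mul lam)
  have hYint : Integrable (fun ω => exp (lam * Z' ω)) μ := hidXY.integrable_iff.mp hint
  have hYeq : (∫ ω, exp (lam * Z' ω) ∂μ) = ∫ ω, exp (lam * Z ω) ∂μ := hidXY.integral_eq.symm
  -- integrability of X * W'
  have hXW'eq : (fun ω => exp (lam * Z ω) * (lam * Z' ω))
      = fun ω => (exp (lam * Z ω) * (lam * Z ω) - A (Z ω, Z' ω) - exp (lam * Z ω))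
          + exp (lam * Z' ω) := by
    funext ω; simp only [hA]; ring
  have hXW'int : Integrable (fun ω => exp (lam * Z ω) * (lam * Z' ω)) μ := by
    rw [hXW'eq]; exact ((hint'.sub hAint).sub hint).add hYint
  have hindepXW' : ProbabilityTheory.IndepFun (fun ω => exp (lam * Z ω))
      (fun ω => lam * Z' ω) μ :=
    hindep.comp (Real.measurable_exp.comp (measurable_id.const_mul lam))
      (measurable_id.const_mul lam)
  have hXne : ¬ (fun ω => exp (lam * Z ω)) =ᵐ[μ] 0 := by
    intro h
    have : (Filter.NeBot (ae μ)) := ae_neBot.2 (IsProbabilityMeasure.ne_zero μ)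
    obtain ⟨ω, hω⟩ := h.exists
    exact (Real.exp_pos (lam * Z ω)).ne' hω
  have hW'int : Integrable (fun ω => lam * Z' ω) μ :=
    hindepXW'.integrable_right_of_integrable_op (· * ·) 1 one_ne_zero
      (fun x y => by simp [enorm_mul]) hXW'int
      (hint.aestronglyMeasurable) ((hZ'.const_mul lam).aestronglyMeasurable) hXne
  have hWint : Integrable (fun ω => lam * Z ω) μ := hidW.integrable_iff.mpr hW'int
  have hmul : (∫ ω, exp (lam * Z ω) * (lam * Z' ω) ∂μ)
      = (∫ ω, exp (lam * Z ω) ∂μ) * ∫ ω, lam * Z' ω ∂μ :=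
    hindepXW'.integral_mul_eq_mul_integral hint.aestronglyMeasurable hW'int.aestronglyMeasurable
  have hW'eq : (∫ ω, lam * Z' ω ∂μ) = ∫ ω, lam * Z ω ∂μ := hidW.integral_eq.symm
  set c := ∫ ω, lam * Z ω ∂μ with hc
  -- Jensen: exp c ≤ ∫ X
  have hjen : exp c ≤ ∫ ω, exp (lam * Z ω) ∂μ := by
    have hle : ∀ ω, exp c + exp c * (lam * Z ω - c) ≤ exp (lam * Z ω) := by
      intro ω
      have h1 := Real.add_one_le_exp (lam * Z ω - c)
      have h2 : exp c * (lam * Z ω - c + 1) ≤ exp c * exp (lam * Z ω - c) :=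
        mul_le_mul_of_nonneg_left h1 (Real.exp_pos c).le
      rw [← Real.exp_add] at h2
      have h3 : c + (lam * Z ω - c) = lam * Z ω := by ring
      rw [h3] at h2
      nlinarith
    have hg : Integrable (fun ω => exp c * (lam * Z ω - c)) μ :=
      (hWint.sub (integrable_const c)).const_mul _
    have hint2 : Integrable (fun ω => exp c + exp c * (lam * Z ω - c)) μ :=
      (integrable_const _).add hg
    have := integral_mono hint2 hint hle
    have hcomp : (∫ ω, (exp c + exp c * (lam * Z ω - c)) ∂μ) = exp c := by
      have hsub : Integrable (fun ω => lam * Z ω - c) μ := hWint.sub (integrable_const c)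
      rw [integral_add (integrable_const _) hg, integral_const, integral_const_mul,
        integral_sub hWint (integrable_const c), integral_const]
      simp [← hc]
    rwa [hcomp] at this
  have hXpos : (0:ℝ) < ∫ ω, exp (lam * Z ω) ∂μ := lt_of_lt_of_le (Real.exp_pos c) hjen
  have hlogle : c ≤ Real.log (∫ ω, exp (lam * Z ω) ∂μ) := by
    calc c = Real.log (exp c) := (Real.log_exp c).symm
      _ ≤ _ := (Real.log_le_log_iff (Real.exp_pos c) hXpos).mpr hjen
  -- compute ∫ A
  have hAinteq : (∫ ω, A (Z ω, Z' ω) ∂μ)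
      = (∫ ω, exp (lam * Z ω) * (lam * Z ω) ∂μ) - (∫ ω, exp (lam * Z ω) ∂μ) * c := by
    have hAfun : (fun ω => A (Z ω, Z' ω))
        = fun ω => (exp (lam * Z ω) * (lam * Z ω) - exp (lam * Z ω) * (lam * Z' ω)
            - exp (lam * Z ω)) + exp (lam * Z' ω) := by
      funext ω; simp only [hA]
    have hI1 : Integrable (fun ω => exp (lam * Z ω) * (lam * Z ω)
        - exp (lam * Z ω) * (lam * Z' ω)) μ := hint'.sub hXW'int
    have hI2 : Integrable (fun ω => exp (lam * Z ω) * (lam * Z ω)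
        - exp (lam * Z ω) * (lam * Z' ω) - exp (lam * Z ω)) μ := hI1.sub hint
    rw [hAfun, integral_add hI2 hYint, integral_sub hI1 hint, integral_sub hint' hXW'int,
      hmul, hW'eq, hYeq]
    ring
  rw [hAinteq]
  have hmul2 : (∫ ω, exp (lam * Z ω) ∂μ) * c
      ≤ (∫ ω, exp (lam * Z ω) ∂μ) * Real.log (∫ ω, exp (lam * Z ω) ∂μ) :=
    mul_le_mul_of_nonneg_left hlogle hXpos.le
  linarith
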